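/- Let α = {α_t : t ≥ 0} be an E₀-semigroup on a factorial non-commutative probability space (M,φ) with φ faithful, such that each α_t is equi-modular. If α_t is an extendable endomorphism for some t > 0, then α_s is extendable for every 0 ≤ s < t; consequently, if α_t is extendable for some t > 0 then the E₀-semigroup α itself is extendable (every α_s, s ≥ 0, is extendable). -/

import Mathlib

set_option synthInstance.maxHeartbeats 400000
set_option maxHeartbeats 1000000

open scoped InnerProductSpace ComplexConjugate

noncomputable section

namespace Paper

variable {H : Type} [NormedAddCommGroup H] [InnerProductSpace ℂ H] [CompleteSpace H]
variable {H' : Type} [NormedAddCommGroup H'] [InnerProductSpace ℂ H'] [CompleteSpace H']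

/-- An operator is a (self-adjoint, idempotent) orthogonal projection. -/
def IsProjection (p : H →L[ℂ] H) : Prop := IsSelfAdjoint p ∧ p * p = p

/-- The vector state determined by a vector `Ω`. -/
def vecState (Ω : H) (x : H →L[ℂ] H) : ℂ := ⟪x Ω, Ω⟫_ℂ

/-- A normal state on a von Neumann algebra, described via its canonical form as a
countable convex combination of vector states. -/
def IsNormalState (M : Set (H →L[ℂ] H)) (φ : (H →L[ℂ] H) → ℂ) : Prop :=
  ∃ ξ : ℕ → H, (Summable fun n => ‖ξ n‖ ^ 2) ∧ (∑' n, ‖ξ n‖ ^ 2) = 1 ∧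
    ∀ x ∈ M, φ x = ∑' n, ⟪x (ξ n), ξ n⟫_ℂ

/-- Normality (complete additivity) of a map between operator algebras: it is `σ`-weakly
continuous, equivalently it preserves sums of orthogonal families of projections lying in the
given domain `S`. -/
def IsNormalMapOn (S : Set (H →L[ℂ] H)) (Θ : (H →L[ℂ] H) → (H' →L[ℂ] H')) : Prop :=
  ∀ {ι : Type} (p : ι → (H →L[ℂ] H)) (q : H →L[ℂ] H),
    (∀ i, p i ∈ S) → q ∈ S →
    (∀ i, IsProjection (p i)) → (∀ i k, i ≠ k → p i * p k = 0) →
    (∀ ξ : H, HasSum (fun i => p i ξ) (q ξ)) →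
    ∀ ξ : H', HasSum (fun i => Θ (p i) ξ) (Θ q ξ)

/-- `Θ` is a `*`-homomorphism on the subset `S` (typically a von Neumann algebra). -/
structure IsStarHomOn (S : Set (H →L[ℂ] H)) (Θ : (H →L[ℂ] H) → (H' →L[ℂ] H')) : Prop where
  map_add : ∀ x ∈ S, ∀ y ∈ S, Θ (x + y) = Θ x + Θ y
  map_smul : ∀ (c : ℂ), ∀ x ∈ S, Θ (c • x) = c • Θ x
  map_mul : ∀ x ∈ S, ∀ y ∈ S, Θ (x * y) = Θ x * Θ y
  map_star : ∀ x ∈ S, Θ (star x) = star (Θ x)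

/-- The (self-adjoint part of the) center of `S` is trivial. -/
def IsFactorSet (S : Set (H →L[ℂ] H)) : Prop :=
  ∀ x ∈ S, (∀ y ∈ S, x * y = y * x) → ∃ c : ℂ, x = c • (1 : H →L[ℂ] H)

/-- A type `I` factor: a factor possessing a minimal projection. -/
def IsTypeIFactorSet (S : Set (H →L[ℂ] H)) : Prop :=
  IsFactorSet S ∧ ∃ p ∈ S, p ≠ 0 ∧ IsProjection p ∧
    ∀ q ∈ S, IsProjection q → q * p = q → q = 0 ∨ q = p

/-- `z` is the central support of the normal state `φ` of the von Neumann algebra `S`, i.e. the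
smallest central projection of full measure. -/
structure IsCentralSupport (S : Set (H →L[ℂ] H)) (φ : (H →L[ℂ] H) → ℂ) (z : H →L[ℂ] H) :
    Prop where
  mem : z ∈ S
  proj : IsProjection z
  central : ∀ y ∈ S, z * y = y * z
  full : φ z = 1
  min : ∀ w ∈ S, IsProjection w → (∀ y ∈ S, w * y = y * w) → φ w = 1 → z * w = z

/-- The von Neumann algebra generated by a (self-adjoint) set of operators. -/
def vN (S : Set (H →L[ℂ] H)) : Set (H →L[ℂ] H) := Set.centralizer (Set.centralizer S)

/-- Standard form data for a von Neumann algebra `M` with cyclic separating unit vector `Ω`: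
`J` is the modular conjugation (an antiunitary involution fixing `Ω`, conjugating `M` onto its
commutant, and positive on the cone `{x j(x) Ω}`), and `j = J (·) J`. -/
structure StandardForm (M : VonNeumannAlgebra H) (Ω : H) (J : H → H)
    (j : (H →L[ℂ] H) → (H →L[ℂ] H)) : Prop where
  unit : ‖Ω‖ = 1
  cyclic : Dense {ξ : H | ∃ x ∈ M, x Ω = ξ}
  separating : ∀ x ∈ M, x Ω = 0 → x = 0
  Jadd : ∀ ξ η : H, J (ξ + η) = J ξ + J η
  Jsmul : ∀ (c : ℂ) (ξ : H), J (c • ξ) = (starRingEnd ℂ) c • J ξ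
  Jinvol : ∀ ξ : H, J (J ξ) = ξ
  Jinner : ∀ ξ η : H, ⟪J ξ, J η⟫_ℂ = ⟪η, ξ⟫_ℂ
  JΩ : J Ω = Ω
  jdef : ∀ (x : H →L[ℂ] H) (ξ : H), j x ξ = J (x (J ξ))
  jmapsTo : ∀ x ∈ M, j x ∈ Set.centralizer (M : Set (H →L[ℂ] H))
  jsurj : ∀ y ∈ Set.centralizer (M : Set (H →L[ℂ] H)), ∃ x ∈ M, j x = y
  pos : ∀ x ∈ M, 0 ≤ (⟪(x * j x) Ω, Ω⟫_ℂ).re ∧ (⟪(x * j x) Ω, Ω⟫_ℂ).im = 0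

/-- A unital `*`-endomorphism of `M` preserving the (faithful, normal) vector state of `Ω`. -/
structure StateEndo (M : VonNeumannAlgebra H) (Ω : H)
    (θ : (H →L[ℂ] H) → (H →L[ℂ] H)) : Prop where
  mapsTo : Set.MapsTo θ (M : Set (H →L[ℂ] H)) (M : Set (H →L[ℂ] H))
  unital : θ 1 = 1
  hom : IsStarHomOn (M : Set (H →L[ℂ] H)) θ
  state : ∀ x ∈ M, ⟪θ x Ω, Ω⟫_ℂ = ⟪x Ω, Ω⟫_ℂ

/-- `u` is the isometry of the GNS space implementing `θ`:  `u x Ω = θ(x) Ω`. -/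
def Implements (M : VonNeumannAlgebra H) (Ω : H) (θ : (H →L[ℂ] H) → (H →L[ℂ] H))
    (u : H →L[ℂ] H) : Prop :=
  (∀ ξ : H, ‖u ξ‖ = ‖ξ‖) ∧ ∀ x ∈ M, u (x Ω) = θ x Ω

/-- `u` commutes with the modular conjugation `J`. -/
def CommutesWithJ (J : H → H) (u : H →L[ℂ] H) : Prop := ∀ ξ : H, u (J ξ) = J (u ξ)

/-- `θ` is equi-modular: its implementing isometry commutes with `J`. -/
def EquiModular (M : VonNeumannAlgebra H) (Ω : H) (J : H → H)
    (θ : (H →L[ℂ] H) → (H →L[ℂ] H)) : Prop :=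
  ∃ u : H →L[ℂ] H, Implements M Ω θ u ∧ CommutesWithJ J u

/-- `Θ = θ⁽²⁾` is a unital normal `*`-endomorphism of `B(L²(M,φ))` extending `θ` and
`j ∘ θ ∘ j`. -/
structure IsExtension (M : VonNeumannAlgebra H) (j : (H →L[ℂ] H) → (H →L[ℂ] H))
    (θ : (H →L[ℂ] H) → (H →L[ℂ] H)) (Θ : (H →L[ℂ] H) → (H →L[ℂ] H)) : Prop where
  hom : IsStarHomOn (Set.univ : Set (H →L[ℂ] H)) Θ
  unital : Θ 1 = 1
  normal : IsNormalMapOn (Set.univ : Set (H →L[ℂ] H)) Θ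
  onM : ∀ x ∈ M, Θ x = θ x
  onComm : ∀ x ∈ M, Θ (j x) = j (θ x)

/-- `θ` is extendable. -/
def Extendable (M : VonNeumannAlgebra H) (j : (H →L[ℂ] H) → (H →L[ℂ] H))
    (θ : (H →L[ℂ] H) → (H →L[ℂ] H)) : Prop :=
  ∃ Θ : (H →L[ℂ] H) → (H →L[ℂ] H), IsExtension M j θ Θ

/-- An `E₀`-semigroup on the von Neumann probability space `(M, ⟨·Ω,Ω⟩)`. -/
structure IsE0Semigroup (M : VonNeumannAlgebra H) (Ω : H)
    (α : ℝ → (H →L[ℂ] H) → (H →L[ℂ] H)) : Prop where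
  endo : ∀ t : ℝ, 0 ≤ t → StateEndo M Ω (α t)
  id0 : ∀ x ∈ M, α 0 x = x
  semigroup : ∀ s t : ℝ, 0 ≤ s → 0 ≤ t → ∀ x ∈ M, α s (α t x) = α (s + t) x
  weakCont : ∀ x ∈ M, ∀ ξ η : H, ContinuousOn (fun t : ℝ => ⟪α t x ξ, η⟫_ℂ) (Set.Ici 0)

set_option linter.unusedSectionVars false

def rk (a b : H) : H →L[ℂ] H := (innerSL ℂ a).smulRight b

@[simp] lemma rk_apply (a b ξ : H) : rk a b ξ = ⟪a, ξ⟫_ℂ • b := rfl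

lemma mul_rk (S : H →L[ℂ] H) (a b : H) : S * rk a b = rk a (S b) := by
  ext ξ; simp [ContinuousLinearMap.mul_apply]

lemma star_rk (a b : H) : star (rk a b) = rk b a := by
  rw [ContinuousLinearMap.star_eq_adjoint]
  symm
  rw [ContinuousLinearMap.eq_adjoint_iff]
  intro x y
  simp [inner_smul_left, inner_smul_right, mul_comm, inner_conj_symm]

lemma rk_mul_rk (a b c d : H) : rk a b * rk c d = ⟪a, d⟫_ℂ • rk c b := by
  ext ξ
  simp [ContinuousLinearMap.mul_apply, inner_smul_right, smul_smul, mul_comm]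

lemma rk_add (a b b' : H) : rk a (b + b') = rk a b + rk a b' := by
  ext ξ; simp [smul_add]

lemma rk_smul (a : H) (c : ℂ) (b : H) : rk a (c • b) = c • rk a b := by
  ext ξ; simp [smul_smul, mul_comm]

lemma scalar_of_commutes (M : VonNeumannAlgebra H)
    (hM : IsFactorSet (M : Set (H →L[ℂ] H))) (d : H →L[ℂ] H)
    (h1 : ∀ x ∈ (M : Set (H →L[ℂ] H)), d * x = x * d)
    (h2 : ∀ y ∈ Set.centralizer (M : Set (H →L[ℂ] H)), d * y = y * d) :
    ∃ c : ℂ, d = c • (1 : H →L[ℂ] H) := by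
  have hdM : d ∈ (M : Set (H →L[ℂ] H)) := by
    rw [← M.centralizer_centralizer]
    rw [Set.mem_centralizer_iff]
    intro y hy
    exact (h2 y hy).symm
  exact hM d hdM h1

/-- The key technical lemma: if a projection-like operator `p` commutes with the image of
`M ∪ M'` under a unital normal `*`-endomorphism `Ψ` of `B(H)`, then `p` commutes with the whole
image of `Ψ`. -/
lemma commuteAll (M : VonNeumannAlgebra H) (hM : IsFactorSet (M : Set (H →L[ℂ] H)))
    (Ω : H) (hΩ : ‖Ω‖ = 1) (Ψ : (H →L[ℂ] H) → (H →L[ℂ] H))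
    (hhom : IsStarHomOn Set.univ Ψ) (hnorm : IsNormalMapOn Set.univ Ψ) (hone : Ψ 1 = 1)
    (p : H →L[ℂ] H)
    (hpM : ∀ x ∈ (M : Set (H →L[ℂ] H)), p * Ψ x = Ψ x * p)
    (hpM' : ∀ y ∈ Set.centralizer (M : Set (H →L[ℂ] H)), p * Ψ y = Ψ y * p)
    (S : H →L[ℂ] H) : p * Ψ S = Ψ S * p := by
  have hΨmul : ∀ a b : H →L[ℂ] H, Ψ (a * b) = Ψ a * Ψ b := fun a b =>
    hhom.map_mul a trivial b trivial
  have hΨstar : ∀ a : H →L[ℂ] H, Ψ (star a) = star (Ψ a) := fun a => hhom.map_star a trivial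
  have hΩ2 : ⟪Ω, Ω⟫_ℂ = 1 := by
    rw [inner_self_eq_norm_sq_to_K, hΩ]; norm_num
  set q : H →L[ℂ] H := rk Ω Ω with hq
  -- Claim 1 (density): a vector orthogonal to all `Ψ (rk Ω ξ) ω` with `Ψ q ω = ω` is zero
  have claim1 : ∀ χ : H,
      (∀ ω : H, Ψ q ω = ω → ∀ ξ : H, ⟪Ψ (rk Ω ξ) ω, χ⟫_ℂ = 0) → χ = 0 := by
    intro χ h
    obtain ⟨w, b, hb⟩ := exists_hilbertBasis ℂ H
    have horthon : Orthonormal ℂ ((↑) : w → H) := by rw [← hb]; exact b.orthonormal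
    have hinner_self : ∀ a : w, ⟪(a : H), (a : H)⟫_ℂ = 1 := by
      intro a
      rw [inner_self_eq_norm_sq_to_K, horthon.1 a]; norm_num
    set P : w → (H →L[ℂ] H) := fun a => rk Ω (a : H) * rk (a : H) Ω with hP
    have hqrk : ∀ c : H, q * rk c Ω = rk c Ω := by
      intro c; rw [hq, rk_mul_rk, hΩ2, one_smul]
    have hζ : ∀ a : w, Ψ (rk (a : H) Ω) χ = 0 := by
      intro a
      have hζF : Ψ q (Ψ (rk (a : H) Ω) χ) = Ψ (rk (a : H) Ω) χ := by
        rw [← ContinuousLinearMap.mul_apply, ← hΨmul, hqrk]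
      have h0 : ⟪Ψ (rk Ω (a : H)) (Ψ (rk (a : H) Ω) χ), χ⟫_ℂ = 0 := h _ hζF (a : H)
      have heq : ⟪Ψ (rk Ω (a : H)) (Ψ (rk (a : H) Ω) χ), χ⟫_ℂ
          = ⟪Ψ (rk (a : H) Ω) χ, Ψ (rk (a : H) Ω) χ⟫_ℂ := by
        have hadj : Ψ (rk Ω (a : H)) = star (Ψ (rk (a : H) Ω)) := by
          rw [← hΨstar, star_rk]
        rw [hadj, ContinuousLinearMap.star_eq_adjoint,
          ContinuousLinearMap.adjoint_inner_left]
      rw [heq, inner_self_eq_zero] at h0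
      exact h0
    have hsum := hnorm P 1 (fun _ => trivial) trivial
      (by
        intro a
        constructor
        · show star (rk Ω (a:H) * rk (a:H) Ω) = _
          rw [star_mul, star_rk, star_rk]
        · show (rk Ω (a:H) * rk (a:H) Ω) * (rk Ω (a:H) * rk (a:H) Ω) = rk Ω (a:H) * rk (a:H) Ω
          rw [mul_assoc, ← mul_assoc (rk (a:H) Ω), rk_mul_rk, hinner_self, one_smul, ← hq,
            hqrk]
        )
      (by
        intro i k hik
        show (rk Ω (i:H) * rk (i:H) Ω) * (rk Ω (k:H) * rk (k:H) Ω) = 0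
        rw [mul_assoc, ← mul_assoc (rk (i:H) Ω), rk_mul_rk, horthon.2 hik, zero_smul,
          zero_mul, mul_zero]
        )
      (by
        intro ξ
        have : ∀ a : w, P a ξ = b.repr ξ a • b a := by
          intro a
          show (rk Ω (a:H) * rk (a:H) Ω) ξ = _
          rw [ContinuousLinearMap.mul_apply]
          rw [show b a = (a : H) from congrFun hb a]
          simp [inner_smul_right, hΩ2, hΩ, b.repr_apply_apply, congrFun hb a]
        rw [show (fun a : w => P a ξ) = fun a => b.repr ξ a • b a from funext this]
        simpa using b.hasSum_repr ξ
        ) χ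
    rw [hone] at hsum
    have : ∀ a : w, Ψ (P a) χ = 0 := by
      intro a
      show Ψ (rk Ω (a:H) * rk (a:H) Ω) χ = 0
      rw [hΨmul, ContinuousLinearMap.mul_apply, hζ a, map_zero]
    rw [show (fun a : w => Ψ (P a) χ) = fun _ => (0:H) from funext this] at hsum
    simpa using hsum.unique hasSum_zero
  -- construction of the intertwining isometries
  have Vex : ∀ ω : H, Ψ q ω = ω → ∃ v : H →L[ℂ] H, ∀ ξ, v ξ = Ψ (rk Ω ξ) ω := by
    intro ω hω
    have hb : ∀ ξ : H, ‖Ψ (rk Ω ξ) ω‖ ≤ ‖ω‖ * ‖ξ‖ := by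
      intro ξ
      have h1 : ⟪Ψ (rk Ω ξ) ω, Ψ (rk Ω ξ) ω⟫_ℂ = ⟪ξ, ξ⟫_ℂ * ⟪ω, ω⟫_ℂ := by
        have h2 : star (Ψ (rk Ω ξ)) * Ψ (rk Ω ξ) = Ψ (⟪ξ, ξ⟫_ℂ • q) := by
          rw [← hΨstar, ← hΨmul, star_rk, rk_mul_rk, hq]
        calc ⟪Ψ (rk Ω ξ) ω, Ψ (rk Ω ξ) ω⟫_ℂ
            = ⟪ω, (star (Ψ (rk Ω ξ)) * Ψ (rk Ω ξ)) ω⟫_ℂ := by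
              rw [ContinuousLinearMap.mul_apply, ContinuousLinearMap.star_eq_adjoint,
                ContinuousLinearMap.adjoint_inner_right]
          _ = ⟪ξ, ξ⟫_ℂ * ⟪ω, ω⟫_ℂ := by
              rw [h2, hhom.map_smul _ _ trivial, ContinuousLinearMap.smul_apply,
                inner_smul_right, hω]
      have h3 : ‖Ψ (rk Ω ξ) ω‖ ^ 2 = (‖ξ‖ * ‖ω‖) ^ 2 := by
        have h2 := congrArg Complex.re h1
        rw [inner_self_eq_norm_sq_to_K, inner_self_eq_norm_sq_to_K,
          inner_self_eq_norm_sq_to_K] at h2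
        simpa [← Complex.ofReal_pow, ← Complex.ofReal_mul, mul_pow] using h2
      have h4 : ‖Ψ (rk Ω ξ) ω‖ = ‖ξ‖ * ‖ω‖ := by
        have hn1 : (0:ℝ) ≤ ‖Ψ (rk Ω ξ) ω‖ := norm_nonneg _
        have hn2 : (0:ℝ) ≤ ‖ξ‖ * ‖ω‖ := by positivity
        nlinarith
      rw [h4]; rw [mul_comm]
    refine ⟨LinearMap.mkContinuous
      { toFun := fun ξ => Ψ (rk Ω ξ) ω
        map_add' := by
          intro ξ ξ'
          show Ψ (rk Ω (ξ + ξ')) ω = Ψ (rk Ω ξ) ω + Ψ (rk Ω ξ') ω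
          rw [rk_add, hhom.map_add _ trivial _ trivial, ContinuousLinearMap.add_apply]
        map_smul' := by
          intro c ξ
          show Ψ (rk Ω (c • ξ)) ω = c • Ψ (rk Ω ξ) ω
          rw [rk_smul, hhom.map_smul _ _ trivial, ContinuousLinearMap.smul_apply] }
      ‖ω‖ hb, fun ξ => rfl⟩
  -- intertwining relations
  have hintP : ∀ (ω : H) (v : H →L[ℂ] H), (∀ ξ, v ξ = Ψ (rk Ω ξ) ω) →
      ∀ (T : H →L[ℂ] H) (ξ : H), Ψ T (v ξ) = v (T ξ) := by
    intro ω v hv T ξ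
    rw [hv, hv, ← ContinuousLinearMap.mul_apply, ← hΨmul, mul_rk]
  have hintOp : ∀ (ω : H) (v : H →L[ℂ] H), (∀ ξ, v ξ = Ψ (rk Ω ξ) ω) →
      ∀ T : H →L[ℂ] H, Ψ T * v = v * T := by
    intro ω v hv T
    ext ξ
    exact hintP ω v hv T ξ
  have hintOp2 : ∀ (ω : H) (v : H →L[ℂ] H), (∀ ξ, v ξ = Ψ (rk Ω ξ) ω) →
      ∀ T : H →L[ℂ] H, star v * Ψ T = T * star v := by
    intro ω v hv T
    have h1 := congrArg star (hintOp ω v hv (star T))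
    rw [star_mul, star_mul, ← hΨstar, star_star] at h1
    exact h1
  -- the sandwiched operators are scalars
  have dsc : ∀ (ω ω' : H), Ψ q ω = ω → Ψ q ω' = ω' → ∀ (v v' : H →L[ℂ] H),
      (∀ ξ, v ξ = Ψ (rk Ω ξ) ω) → (∀ ξ, v' ξ = Ψ (rk Ω ξ) ω') →
      ∃ lam : ℂ, star v' * (p * v) = lam • 1 := by
    intro ω ω' hω hω' v v' hv hv'
    have hcom : ∀ T : H →L[ℂ] H, p * Ψ T = Ψ T * p →
        star v' * (p * v) * T = T * (star v' * (p * v)) := by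
      intro T hT
      have hvT : v * T = Ψ T * v := (hintOp ω v hv T).symm
      have h2 : star v' * Ψ T = T * star v' := hintOp2 ω' v' hv' T
      calc star v' * (p * v) * T
          = star v' * (p * (v * T)) := by noncomm_ring
        _ = star v' * ((p * Ψ T) * v) := by rw [hvT]; noncomm_ring
        _ = star v' * ((Ψ T * p) * v) := by rw [hT]
        _ = (star v' * Ψ T) * (p * v) := by noncomm_ring
        _ = (T * star v') * (p * v) := by rw [h2]
        _ = T * (star v' * (p * v)) := by noncomm_ring
    exact scalar_of_commutes M hM _ (fun x hx => hcom x (hpM x hx))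
      (fun y hy => hcom y (hpM' y hy))
  -- Step 1 : the commutator kills the generating vectors
  set C : H →L[ℂ] H := p * Ψ S - Ψ S * p with hC
  have step1 : ∀ (ω : H), Ψ q ω = ω → ∀ ξ : H, C (Ψ (rk Ω ξ) ω) = 0 := by
    intro ω hω ξ
    apply claim1
    intro ω' hω' ξ'
    obtain ⟨v, hv⟩ := Vex ω hω
    obtain ⟨v', hv'⟩ := Vex ω' hω'
    obtain ⟨lam, hlam⟩ := dsc ω ω' hω hω' v v' hv hv'
    rw [← hv, ← hv']
    have e1 : ⟪v' ξ', (p * Ψ S) (v ξ)⟫_ℂ = lam * ⟪ξ', S ξ⟫_ℂ := by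
      rw [ContinuousLinearMap.mul_apply, hintP ω v hv S ξ]
      rw [show p (v (S ξ)) = (p * v) (S ξ) from rfl]
      rw [← ContinuousLinearMap.adjoint_inner_right v' ξ' ((p * v) (S ξ))]
      rw [← ContinuousLinearMap.star_eq_adjoint, ← ContinuousLinearMap.mul_apply, hlam]
      rw [ContinuousLinearMap.smul_apply, ContinuousLinearMap.one_apply, inner_smul_right]
    have e2 : ⟪v' ξ', (Ψ S * p) (v ξ)⟫_ℂ = lam * ⟪ξ', S ξ⟫_ℂ := by
      rw [ContinuousLinearMap.mul_apply]
      rw [← ContinuousLinearMap.adjoint_inner_left (Ψ S) (p (v ξ)) (v' ξ')]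
      rw [← ContinuousLinearMap.star_eq_adjoint, ← hΨstar, hintP ω' v' hv' (star S) ξ']
      rw [show p (v ξ) = (p * v) ξ from rfl]
      rw [← ContinuousLinearMap.adjoint_inner_right v' (star S ξ') ((p * v) ξ)]
      rw [← ContinuousLinearMap.star_eq_adjoint, ← ContinuousLinearMap.mul_apply, hlam]
      rw [ContinuousLinearMap.smul_apply, ContinuousLinearMap.one_apply, inner_smul_right]
      rw [ContinuousLinearMap.star_eq_adjoint, ContinuousLinearMap.adjoint_inner_left]
    rw [hC, ContinuousLinearMap.sub_apply, inner_sub_right, e1, e2, sub_self]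
  -- Step 2 : conclude
  have hCzero : C = 0 := by
    have hstar : star C = 0 := by
      ext χ'
      rw [ContinuousLinearMap.zero_apply]
      apply claim1
      intro ω hω ξ
      rw [ContinuousLinearMap.star_eq_adjoint,
        ContinuousLinearMap.adjoint_inner_right, step1 ω hω ξ, inner_zero_left]
    have := congrArg star hstar
    rwa [star_star, star_zero] at this
  have := sub_eq_zero.mp (hC ▸ hCzero)
  exact this

/-- `j` is a `*`-antihomomorphism-like conjugation: `star (j x) = j (star x)`. -/
lemma StandardForm.jstar {M : VonNeumannAlgebra H} {Ω : H} {J : H → H}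
    {j : (H →L[ℂ] H) → (H →L[ℂ] H)} (hSF : StandardForm M Ω J j) (x : H →L[ℂ] H) :
    star (j x) = j (star x) := by
  have key : j (star x) = ContinuousLinearMap.adjoint (j x) := by
    rw [ContinuousLinearMap.eq_adjoint_iff]
    intro ξ η
    rw [hSF.jdef, hSF.jdef]
    calc ⟪J (star x (J ξ)), η⟫_ℂ
        = ⟪J (star x (J ξ)), J (J η)⟫_ℂ := by rw [hSF.Jinvol]
      _ = ⟪J η, star x (J ξ)⟫_ℂ := hSF.Jinner _ _
      _ = ⟪x (J η), J ξ⟫_ℂ := by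
          rw [ContinuousLinearMap.star_eq_adjoint, ContinuousLinearMap.adjoint_inner_right]
      _ = ⟪J (J (x (J η))), J ξ⟫_ℂ := by rw [hSF.Jinvol]
      _ = ⟪ξ, J (x (J η))⟫_ℂ := hSF.Jinner _ _
  rw [ContinuousLinearMap.star_eq_adjoint, key]

/-- Main step: if `θ ∘ σ` is extendable and `θ` is equi-modular, then `σ` is extendable. -/
lemma stepExt (M : VonNeumannAlgebra H) (Ω : H) (J : H → H)
    (j : (H →L[ℂ] H) → (H →L[ℂ] H)) (hSF : StandardForm M Ω J j)
    (hM : IsFactorSet (M : Set (H →L[ℂ] H)))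
    (θ σ τ : (H →L[ℂ] H) → (H →L[ℂ] H))
    (hθ : StateEndo M Ω θ) (hσ : Set.MapsTo σ (M : Set (H →L[ℂ] H)) (M : Set (H →L[ℂ] H)))
    (hcomp : ∀ x ∈ (M : Set (H →L[ℂ] H)), θ (σ x) = τ x)
    (hτ : Extendable M j τ) (he : EquiModular M Ω J θ) : Extendable M j σ := by
  obtain ⟨Ψ, hΨ⟩ := hτ
  obtain ⟨u, hu, huJ⟩ := he
  -- basic facts about the implementing isometry
  have hinner : ∀ ξ η : H, ⟪u ξ, u η⟫_ℂ = ⟪ξ, η⟫_ℂ := by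
    intro ξ η
    exact (⟨u.toLinearMap, hu.1⟩ : H →ₗᵢ[ℂ] H).inner_map_map ξ η
  have huu : star u * u = 1 := by
    ext ξ
    refine ext_inner_left ℂ fun η => ?_
    rw [ContinuousLinearMap.mul_apply, ContinuousLinearMap.star_eq_adjoint,
      ContinuousLinearMap.adjoint_inner_right, hinner, ContinuousLinearMap.one_apply]
  have f2 : ∀ y ∈ (M : Set (H →L[ℂ] H)), θ y * u = u * y := by
    intro y hy
    apply DFunLike.coe_injective
    refine Continuous.ext_on hSF.cyclic (θ y * u).continuous (u * y).continuous ?_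
    rintro ξ ⟨x, hx, rfl⟩
    show θ y (u (x Ω)) = u (y (x Ω))
    rw [hu.2 x hx, show θ y (θ x Ω) = (θ y * θ x) Ω from rfl, ← hθ.hom.map_mul y hy x hx,
      show y (x Ω) = (y * x) Ω from rfl, hu.2 (y * x) (mul_mem hy hx)]
  have f3 : ∀ y ∈ (M : Set (H →L[ℂ] H)), star u * θ y = y * star u := by
    intro y hy
    have h1 := congrArg star (f2 (star y) (star_mem hy))
    simp only [star_mul, star_star] at h1
    rw [← hθ.hom.map_star (star y) (star_mem hy), star_star] at h1
    exact h1
  have f4 : ∀ y ∈ (M : Set (H →L[ℂ] H)), j (θ y) * u = u * j y := by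
    intro y hy
    ext ξ
    show j (θ y) (u ξ) = u (j y ξ)
    rw [hSF.jdef, hSF.jdef, ← huJ ξ, huJ (y (J ξ))]
    congr 1
    rw [show θ y (u (J ξ)) = (θ y * u) (J ξ) from rfl, f2 y hy]
    rfl
  have f5 : ∀ y ∈ (M : Set (H →L[ℂ] H)), star u * j (θ y) = j y * star u := by
    intro y hy
    have h1 := congrArg star (f4 (star y) (star_mem hy))
    simp only [star_mul, hSF.jstar, star_star] at h1
    rw [← hθ.hom.map_star (star y) (star_mem hy), star_star] at h1
    exact h1
  -- the range projection commutes with θ(M) and j θ(M)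
  have f6 : ∀ y ∈ (M : Set (H →L[ℂ] H)), (u * star u) * θ y = θ y * (u * star u) := by
    intro y hy
    calc (u * star u) * θ y = u * (star u * θ y) := by noncomm_ring
      _ = u * (y * star u) := by rw [f3 y hy]
      _ = (u * y) * star u := by noncomm_ring
      _ = (θ y * u) * star u := by rw [f2 y hy]
      _ = θ y * (u * star u) := by noncomm_ring
  have f7 : ∀ y ∈ (M : Set (H →L[ℂ] H)),
      (u * star u) * j (θ y) = j (θ y) * (u * star u) := by
    intro y hy
    calc (u * star u) * j (θ y) = u * (star u * j (θ y)) := by noncomm_ring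
      _ = u * (j y * star u) := by rw [f5 y hy]
      _ = (u * j y) * star u := by noncomm_ring
      _ = (j (θ y) * u) * star u := by rw [f4 y hy]
      _ = j (θ y) * (u * star u) := by noncomm_ring
  -- the commutation lemma
  have hcomm : ∀ S : H →L[ℂ] H, (u * star u) * Ψ S = Ψ S * (u * star u) := by
    apply commuteAll M hM Ω hSF.unit Ψ hΨ.hom hΨ.normal hΨ.unital
    · intro x hx
      rw [hΨ.onM x hx, ← hcomp x hx]
      exact f6 (σ x) (hσ hx)
    · intro y hy
      obtain ⟨x, hx, rfl⟩ := hSF.jsurj y hy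
      rw [hΨ.onComm x hx, ← hcomp x hx]
      exact f7 (σ x) (hσ hx)
  -- the extension of σ
  refine ⟨fun T => star u * Ψ T * u, ?_, ?_, ?_, ?_, ?_⟩
  · constructor
    · intro x _ y _
      rw [hΨ.hom.map_add x trivial y trivial]
      noncomm_ring
    · intro c x _
      rw [hΨ.hom.map_smul c x trivial]
      rw [mul_smul_comm, smul_mul_assoc]
    · intro x _ y _
      have h1 : ∀ A B : H →L[ℂ] H,
          (star u * A * u) * (star u * B * u) = star u * (A * ((u * star u) * B)) * u := by
        intros; noncomm_ring
      rw [hΨ.hom.map_mul x trivial y trivial, h1, hcomm]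
      have h2 : star u * (Ψ x * (Ψ y * (u * star u))) * u
          = star u * (Ψ x * Ψ y) * (u * (star u * u)) := by noncomm_ring
      rw [h2, huu, mul_one]
    · intro x _
      rw [hΨ.hom.map_star x trivial]
      rw [star_mul, star_mul, star_star]
      noncomm_ring
  · rw [hΨ.unital]
    rw [mul_one, huu]
  · intro ι P q hP hq hproj horth hsum ξ
    have h1 := hΨ.normal P q (fun _ => trivial) trivial hproj horth hsum (u ξ)
    have h2 := h1.mapL (star u)
    simpa [ContinuousLinearMap.mul_apply] using h2
  · intro x hx
    rw [hΨ.onM x hx, ← hcomp x hx]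
    calc star u * θ (σ x) * u = (σ x * star u) * u := by rw [f3 (σ x) (hσ hx)]
      _ = σ x * (star u * u) := by noncomm_ring
      _ = σ x := by rw [huu, mul_one]
  · intro x hx
    rw [hΨ.onComm x hx, ← hcomp x hx]
    calc star u * j (θ (σ x)) * u = (j (σ x) * star u) * u := by rw [f5 (σ x) (hσ hx)]
      _ = j (σ x) * (star u * u) := by noncomm_ring
      _ = j (σ x) := by rw [huu, mul_one]

/-- Compositions of extendable endomorphisms are extendable. -/
lemma compExt (M : VonNeumannAlgebra H) (j : (H →L[ℂ] H) → (H →L[ℂ] H))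
    (θ₁ θ₂ σ : (H →L[ℂ] H) → (H →L[ℂ] H))
    (h1 : Extendable M j θ₁) (h2 : Extendable M j θ₂)
    (hmap : Set.MapsTo θ₂ (M : Set (H →L[ℂ] H)) (M : Set (H →L[ℂ] H)))
    (hcomp : ∀ x ∈ (M : Set (H →L[ℂ] H)), θ₁ (θ₂ x) = σ x) : Extendable M j σ := by
  obtain ⟨Θ₁, hΘ₁⟩ := h1
  obtain ⟨Θ₂, hΘ₂⟩ := h2
  have hΘ₂zero : Θ₂ 0 = 0 := by
    have := hΘ₂.hom.map_smul 0 1 trivial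
    simpa using this
  refine ⟨fun T => Θ₁ (Θ₂ T), ?_, ?_, ?_, ?_, ?_⟩
  · constructor
    · intro x _ y _
      rw [hΘ₂.hom.map_add x trivial y trivial, hΘ₁.hom.map_add _ trivial _ trivial]
    · intro c x _
      rw [hΘ₂.hom.map_smul c x trivial, hΘ₁.hom.map_smul c _ trivial]
    · intro x _ y _
      rw [hΘ₂.hom.map_mul x trivial y trivial, hΘ₁.hom.map_mul _ trivial _ trivial]
    · intro x _
      rw [hΘ₂.hom.map_star x trivial, hΘ₁.hom.map_star _ trivial]
  · rw [hΘ₂.unital, hΘ₁.unital]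
  · intro ι P q hP hq hproj horth hsum ξ
    refine hΘ₁.normal (fun i => Θ₂ (P i)) (Θ₂ q) (fun _ => trivial) trivial ?_ ?_ ?_ ξ
    · intro i
      constructor
      · show star (Θ₂ (P i)) = Θ₂ (P i)
        rw [← hΘ₂.hom.map_star _ trivial, (hproj i).1.star_eq]
      · rw [← hΘ₂.hom.map_mul _ trivial _ trivial, (hproj i).2]
    · intro i k hik
      rw [← hΘ₂.hom.map_mul _ trivial _ trivial, horth i k hik, hΘ₂zero]
    · exact fun η => hΘ₂.normal P q hP hq hproj horth hsum η
  · intro x hx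
    rw [hΘ₂.onM x hx, hΘ₁.onM _ (hmap hx), hcomp x hx]
  · intro x hx
    rw [hΘ₂.onComm x hx, hΘ₁.onComm _ (hmap hx), hcomp x hx]

/-- **Remark 5.5.**  Let `α = {α_t}` be an `E₀`-semigroup on the factorial probability space
`(M, φ)` in standard form, with each `α_t` equi-modular.  If `α_t` is extendable for some
`t > 0`, then `α_s` is extendable for all `0 ≤ s < t`; consequently the whole `E₀`-semigroup
`α` is extendable (every `α_s`, `s ≥ 0`, is extendable). -/
theorem remark_5_5
    (M : VonNeumannAlgebra H) (Ω : H) (J : H → H) (j : (H →L[ℂ] H) → (H →L[ℂ] H))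
    (hSF : StandardForm M Ω J j) (hM : IsFactorSet (M : Set (H →L[ℂ] H)))
    (α : ℝ → (H →L[ℂ] H) → (H →L[ℂ] H))
    (hα : IsE0Semigroup M Ω α)
    (hequi : ∀ t : ℝ, 0 ≤ t → EquiModular M Ω J (α t)) :
    ∀ t : ℝ, 0 < t → Extendable M j (α t) →
      (∀ s : ℝ, 0 ≤ s → s < t → Extendable M j (α s)) ∧
      ∀ s : ℝ, 0 ≤ s → Extendable M j (α s) := by
  intro t ht htext
  have key : ∀ s : ℝ, 0 ≤ s → s ≤ t → Extendable M j (α s) := by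
    intro s hs hst
    refine stepExt M Ω J j hSF hM (α (t - s)) (α s) (α t) (hα.endo _ (by linarith))
      ((hα.endo s hs).mapsTo) ?_ htext (hequi _ (by linarith))
    intro x hx
    rw [hα.semigroup (t - s) s (by linarith) hs x hx, sub_add_cancel]
  have all : ∀ n : ℕ, ∀ s : ℝ, 0 ≤ s → s ≤ ((n : ℝ) + 1) * t → Extendable M j (α s) := by
    intro n
    induction n with
    | zero =>
        intro s hs h
        exact key s hs (by simpa using h)
    | succ n ih =>
        intro s hs h
        by_cases hc : s ≤ ((n : ℝ) + 1) * t
        · exact ih s hs hc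
        · push_neg at hc
          have h1 : (0 : ℝ) ≤ s - t := by nlinarith [Nat.cast_nonneg n (α := ℝ)]
          have h2 : s - t ≤ ((n : ℝ) + 1) * t := by push_cast at h; nlinarith
          refine compExt M j (α (s - t)) (α t) (α s) (ih (s - t) h1 h2) htext
            ((hα.endo t ht.le).mapsTo) ?_
          intro x hx
          rw [hα.semigroup (s - t) t h1 ht.le x hx, sub_add_cancel]
  constructor
  · intro s hs hst
    exact key s hs hst.le
  · intro s hs
    obtain ⟨n, hn⟩ := exists_nat_gt (s / t)
    refine all n s hs ?_
    rw [div_lt_iff₀ ht] at hn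
    nlinarith

end Paper
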